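/- Every finite metric space M admits a (possibly infinite) metric space N satisfying the four-point condition together with a surjective non-contractive multi-embedding f : N → M of path distortion 1; that is, every path ⟨u_1,…,u_m⟩ in M has a lift ⟨u'_1,…,u'_m⟩ in N with f(u'_i) = u_i and Σ_{i=1}^{m−1} d_N(u'_i,u'_{i+1}) ≤ Σ_{i=1}^{m−1} d_M(u_i,u_{i+1}). -/

import Mathlib

section StarAux

variable {M : Type*} [MetricSpace M]

/-- The list of consecutive distances of a path. -/
private noncomputable def mSteps (p : List M) : List ℝ :=
  List.zipWith dist p p.tail

private lemma length_mSteps (p : List M) : (mSteps p).length = p.length - 1 := by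
  rw [mSteps, List.length_zipWith, List.length_tail]; omega

private lemma mSteps_nonneg (p : List M) : ∀ x ∈ mSteps p, 0 ≤ x := by
  intro x hx
  rw [List.mem_iff_getElem] at hx
  obtain ⟨i, hi, rfl⟩ := hx
  simp only [mSteps, List.getElem_zipWith]
  exact dist_nonneg

/-- Partial length: sum of the first `i` steps. -/
private noncomputable def mSig (p : List M) (i : ℕ) : ℝ :=
  ((mSteps p).take i).sum

private lemma mSig_nonneg (p : List M) (i : ℕ) : 0 ≤ mSig p i :=
  List.sum_nonneg fun x hx => mSteps_nonneg p x (List.take_subset _ _ hx)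

private lemma mSig_mono (p : List M) {i j : ℕ} (h : i ≤ j) : mSig p i ≤ mSig p j := by
  rw [mSig, mSig, ← Nat.add_sub_cancel' h, List.take_add, List.sum_append]
  exact le_add_of_nonneg_right <| List.sum_nonneg fun x hx =>
    mSteps_nonneg p x (List.drop_subset _ _ (List.take_subset _ _ hx))

private lemma mSteps_getElem (m0 : M) (p : List M) {i : ℕ} (h : i < (mSteps p).length) :
    (mSteps p)[i] = dist (p.getD i m0) (p.getD (i + 1) m0) := by
  have hl := length_mSteps p
  have h1 : i < p.length := by omega
  have h2 : i + 1 < p.length := by omega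
  rw [List.getD_eq_getElem _ _ h1, List.getD_eq_getElem _ _ h2]
  simp only [mSteps, List.getElem_zipWith, List.getElem_tail]

private lemma mSig_succ (m0 : M) (p : List M) {i : ℕ} (h : i + 1 < p.length) :
    mSig p (i + 1) = mSig p i + dist (p.getD i m0) (p.getD (i + 1) m0) := by
  have hi : i < (mSteps p).length := by rw [length_mSteps]; omega
  rw [mSig, mSig, List.sum_take_succ _ _ hi, mSteps_getElem m0 p hi]

private lemma mSig_sat (p : List M) {i : ℕ} (h : p.length - 1 ≤ i) :
    mSig p i = (mSteps p).sum := by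
  rw [mSig, List.take_of_length_le (by rw [length_mSteps]; omega)]

private lemma mSig_clamp (p : List M) (i : ℕ) :
    mSig p (min i (p.length - 1)) = mSig p i := by
  rcases le_total i (p.length - 1) with h | h
  · rw [min_eq_left h]
  · rw [min_eq_right h, mSig_sat p le_rfl, mSig_sat p h]

private lemma mLip (m0 : M) (p : List M) :
    ∀ i j, i ≤ j → j < p.length →
      dist (p.getD i m0) (p.getD j m0) ≤ mSig p j - mSig p i := by
  intro i j hij
  induction j, hij using Nat.le_induction with
  | base => intro _; simp
  | succ j hj ih =>
    intro h
    have hj' : j < p.length := by omega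
    have t := dist_triangle (p.getD i m0) (p.getD j m0) (p.getD (j + 1) m0)
    have h1 := ih hj'
    have h2 := mSig_succ m0 p h
    linarith

private lemma f0Lip (m0 : M) (p : List M) (i j : ℕ) :
    dist (p.getD (min i (p.length - 1)) m0) (p.getD (min j (p.length - 1)) m0) ≤
      |mSig p i - mSig p j| := by
  suffices H : ∀ i j : ℕ, i ≤ j →
      dist (p.getD (min i (p.length - 1)) m0) (p.getD (min j (p.length - 1)) m0) ≤
        |mSig p i - mSig p j| by
    rcases le_total i j with h | h
    · exact H i j h
    · rw [dist_comm, abs_sub_comm]; exact H j i h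
  intro i j hij
  rcases Nat.eq_zero_or_pos p.length with hp | hp
  · have hnil : p = [] := List.length_eq_zero_iff.mp hp
    subst hnil
    simpa using abs_nonneg _
  · have h1 : min i (p.length - 1) ≤ min j (p.length - 1) := by omega
    have h2 : min j (p.length - 1) < p.length := by omega
    have hl := mLip m0 p _ _ h1 h2
    rw [mSig_clamp, mSig_clamp] at hl
    calc dist (p.getD (min i (p.length - 1)) m0) (p.getD (min j (p.length - 1)) m0)
        ≤ mSig p j - mSig p i := hl
    _ ≤ |mSig p i - mSig p j| := by rw [abs_sub_comm]; exact le_abs_self _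

end StarAux

section StarMetric

/-- A point of the star space: a path (component index) together with a position. -/
private structure StarPt (I : Type*) : Type _ where
  l : List I
  k : ℕ

private lemma star_triangle {I : Type*} [DecidableEq I] {K : ℝ} (hK : 0 ≤ K)
    (p1 p2 p3 : I) {s1 s2 s3 : ℝ}
    (h1 : 0 ≤ s1) (h2 : 0 ≤ s2) (h3 : 0 ≤ s3) :
    (if p1 = p3 then |s1 - s3| else s1 + s3 + K) ≤
      (if p1 = p2 then |s1 - s2| else s1 + s2 + K) +
        (if p2 = p3 then |s2 - s3| else s2 + s3 + K) := by
  split_ifs with a1 a2 a3 <;>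
  first
    | (exfalso; subst_vars; simp_all; done)
    | (rcases abs_cases (s1 - s3) with ⟨e1, f1⟩ | ⟨e1, f1⟩ <;>
       rcases abs_cases (s1 - s2) with ⟨e2, f2⟩ | ⟨e2, f2⟩ <;>
       rcases abs_cases (s2 - s3) with ⟨e3, f3⟩ | ⟨e3, f3⟩ <;>
       (try simp only [e1, e2, e3]) <;> linarith)

set_option maxHeartbeats 1000000 in
private lemma star_fpc {I : Type*} [DecidableEq I] {K : ℝ} (hK : 0 ≤ K)
    (p1 p2 p3 p4 : I) {s1 s2 s3 s4 : ℝ}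
    (h1 : 0 ≤ s1) (h2 : 0 ≤ s2) (h3 : 0 ≤ s3) (h4 : 0 ≤ s4) :
    (if p1 = p2 then |s1 - s2| else s1 + s2 + K) +
      (if p3 = p4 then |s3 - s4| else s3 + s4 + K) ≤
    max ((if p1 = p3 then |s1 - s3| else s1 + s3 + K) +
          (if p2 = p4 then |s2 - s4| else s2 + s4 + K))
        ((if p1 = p4 then |s1 - s4| else s1 + s4 + K) +
          (if p2 = p3 then |s2 - s3| else s2 + s3 + K)) := by
  rw [le_max_iff]
  split_ifs with a1 a2 a3 a4 a5 a6 <;>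
  first
    | (exfalso; subst_vars; simp_all; done)
    | (rcases abs_cases (s1 - s2) with ⟨e1, f1⟩ | ⟨e1, f1⟩ <;>
       rcases abs_cases (s3 - s4) with ⟨e2, f2⟩ | ⟨e2, f2⟩ <;>
       rcases abs_cases (s1 - s3) with ⟨e3, f3⟩ | ⟨e3, f3⟩ <;>
       rcases abs_cases (s2 - s4) with ⟨e4, f4⟩ | ⟨e4, f4⟩ <;>
       rcases abs_cases (s1 - s4) with ⟨e5, f5⟩ | ⟨e5, f5⟩ <;>
       rcases abs_cases (s2 - s3) with ⟨e6, f6⟩ | ⟨e6, f6⟩ <;>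
       (try simp only [e1, e2, e3, e4, e5, e6]) <;>
       first
         | (left; linarith)
         | (right; linarith))

private noncomputable def sDist {I : Type*} [DecidableEq I] {M : Type*} [MetricSpace M]
    (c : I → M) (K : ℝ) (a b : StarPt I) : ℝ :=
  if a.l = b.l then |mSig (a.l.map c) a.k - mSig (b.l.map c) b.k|
  else mSig (a.l.map c) a.k + mSig (b.l.map c) b.k + K

private noncomputable def starPMS {I : Type*} [DecidableEq I] {M : Type*} [MetricSpace M]
    (c : I → M) (K : ℝ) (hK : 0 ≤ K) : PseudoMetricSpace (StarPt I) where
  dist := sDist c K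
  dist_self a := by simp [sDist]
  dist_comm a b := by
    rcases eq_or_ne a.l b.l with h | h
    · simp [sDist, h, abs_sub_comm]
    · simp only [sDist, if_neg h, if_neg (Ne.symm h)]; ring
  dist_triangle a b c' := by
    simp only [sDist]
    exact star_triangle hK a.l b.l c'.l (mSig_nonneg _ _) (mSig_nonneg _ _) (mSig_nonneg _ _)

end StarMetric

/-- A metric space satisfying the four-point condition (a tree metric). -/
def FourPointCond (X : Type*) [MetricSpace X] : Prop :=
  ∀ x y z w : X, dist x y + dist z w ≤ max (dist x z + dist y w) (dist x w + dist y z)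

/-- A multi-embedding `f : N → M` (a surjective map) is non-contractive if
distances in `N` dominate the distances of the images in `M`. -/
def NonContractive {N M : Type*} [MetricSpace N] [MetricSpace M] (f : N → M) : Prop :=
  ∀ u v : N, dist (f u) (f v) ≤ dist u v

/-- The length of a path (finite sequence of points) in a metric space. -/
noncomputable def pathLength {X : Type*} [MetricSpace X] (p : List X) : ℝ :=
  (List.zipWith dist p p.tail).sum

/-- A non-contractive multi-embedding `f : N → M` has path distortion at most `α`. -/
def PathDistortionLE {N M : Type*} [MetricSpace N] [MetricSpace M] (f : N → M) (α : ℝ) : Prop :=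
  ∀ p : List M, ∃ p' : List N, p'.map f = p ∧ pathLength p' ≤ α * pathLength p

/-- Every finite metric space admits a (possibly infinite) tree metric — a metric space
satisfying the four-point condition — together with a surjective non-contractive
multi-embedding of path distortion `1`. -/
theorem multiEmbedding_into_infinite_tree_distortion_one
    (M : Type*) [MetricSpace M] [Fintype M] :
    ∃ (N : Type) (_ : MetricSpace N) (f : N → M),
      FourPointCond N ∧
      Function.Surjective f ∧
      NonContractive f ∧
      PathDistortionLE f 1 := by
  classical
  rcases isEmpty_or_nonempty M with hM | hM
  · refine ⟨Empty, inferInstance, fun e => e.elim, ?_, ?_, ?_, ?_⟩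
    · intro x; exact x.elim
    · intro m; exact (hM.false m).elim
    · intro u; exact u.elim
    · intro p
      cases p with
      | nil => exact ⟨[], rfl, by simp [pathLength]⟩
      | cons a _ => exact (hM.false a).elim
  · obtain ⟨m0⟩ := hM
    obtain ⟨K, hK0, hKb⟩ : ∃ K : ℝ, 0 < K ∧ ∀ a b : M, dist a b ≤ K := by
      have hfin : (Set.range fun q : M × M => dist q.1 q.2).Finite := Set.finite_range _
      obtain ⟨C, hC⟩ := hfin.bddAbove
      have h0 : (0 : ℝ) ≤ C := by
        have := hC (Set.mem_range_self (m0, m0)); simpa using this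
      refine ⟨C + 1, by linarith, fun a b => ?_⟩
      have := hC (Set.mem_range_self (a, b)); simp at this; linarith
    set n := Fintype.card M with hn
    let e : M ≃ Fin n := Fintype.equivFin M
    letI PM : PseudoMetricSpace (StarPt (Fin n)) := starPMS (⇑e.symm) K hK0.le
    have hdist : ∀ a b : StarPt (Fin n), dist a b = sDist (⇑e.symm) K a b := fun _ _ => rfl
    have hwd : ∀ a b : StarPt (Fin n), Inseparable a b →
        (a.l.map ⇑e.symm).getD (min a.k (a.l.length - 1)) m0 =
        (b.l.map ⇑e.symm).getD (min b.k (b.l.length - 1)) m0 := by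
      intro a b hab
      have h0 : dist a b = 0 := Metric.inseparable_iff.1 hab
      rw [hdist, sDist] at h0
      split_ifs at h0 with hc
      · obtain ⟨la, ia⟩ := a
        obtain ⟨lb, ib⟩ := b
        simp only at hc
        subst hc
        have hs : mSig (la.map ⇑e.symm) ia = mSig (la.map ⇑e.symm) ib := by
          have := abs_eq_zero.mp h0; linarith
        have hle := f0Lip m0 (la.map ⇑e.symm) ia ib
        rw [hs, sub_self, abs_zero] at hle
        have := dist_le_zero.mp hle
        simpa [List.length_map] using this
      · exfalso
        have n1 := mSig_nonneg (a.l.map ⇑e.symm) a.k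
        have n2 := mSig_nonneg (b.l.map ⇑e.symm) b.k
        linarith
    refine ⟨SeparationQuotient (StarPt (Fin n)), inferInstance,
      SeparationQuotient.lift
        (fun a => (a.l.map ⇑e.symm).getD (min a.k (a.l.length - 1)) m0) hwd,
      ?_, ?_, ?_, ?_⟩
    · -- four point condition
      intro x y z w
      obtain ⟨a, rfl⟩ := SeparationQuotient.surjective_mk x
      obtain ⟨b, rfl⟩ := SeparationQuotient.surjective_mk y
      obtain ⟨u, rfl⟩ := SeparationQuotient.surjective_mk z
      obtain ⟨v, rfl⟩ := SeparationQuotient.surjective_mk w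
      rw [SeparationQuotient.dist_mk, SeparationQuotient.dist_mk,
        SeparationQuotient.dist_mk, SeparationQuotient.dist_mk,
        SeparationQuotient.dist_mk, SeparationQuotient.dist_mk]
      simp only [hdist, sDist]
      exact star_fpc hK0.le a.l b.l u.l v.l
        (mSig_nonneg _ _) (mSig_nonneg _ _) (mSig_nonneg _ _) (mSig_nonneg _ _)
    · -- surjective
      intro m
      refine ⟨SeparationQuotient.mk ⟨[e m], 0⟩, ?_⟩
      rw [SeparationQuotient.lift_mk]
      simp
    · -- non-contractive
      intro uu vv
      obtain ⟨a, rfl⟩ := SeparationQuotient.surjective_mk uu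
      obtain ⟨b, rfl⟩ := SeparationQuotient.surjective_mk vv
      rw [SeparationQuotient.lift_mk, SeparationQuotient.lift_mk,
        SeparationQuotient.dist_mk, hdist, sDist]
      split_ifs with hc
      · obtain ⟨la, ia⟩ := a
        obtain ⟨lb, ib⟩ := b
        simp only at hc
        subst hc
        have := f0Lip m0 (la.map ⇑e.symm) ia ib
        simpa [List.length_map] using this
      · have n1 := mSig_nonneg (a.l.map ⇑e.symm) a.k
        have n2 := mSig_nonneg (b.l.map ⇑e.symm) b.k
        have := hKb ((a.l.map ⇑e.symm).getD (min a.k (a.l.length - 1)) m0)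
          ((b.l.map ⇑e.symm).getD (min b.k (b.l.length - 1)) m0)
        linarith
    · -- path distortion 1
      intro p
      have hqc : (p.map ⇑e).map ⇑e.symm = p := by
        rw [List.map_map]; simp
      have hql : (p.map ⇑e).length = p.length := List.length_map _
      refine ⟨(List.range p.length).map
        (fun k => SeparationQuotient.mk ⟨p.map ⇑e, k⟩), ?_, ?_⟩
      · apply List.ext_getElem
        · simp
        · intro k h1 h2
          simp only [List.getElem_map, List.getElem_range]
          rw [SeparationQuotient.lift_mk]
          show (List.map (⇑e.symm) (p.map ⇑e)).getD (min k ((p.map ⇑e).length - 1)) m0 = p[k]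
          rw [hqc, hql, min_eq_left (by omega)]
          exact List.getD_eq_getElem _ _ h2
      · rw [one_mul]
        apply le_of_eq
        simp only [pathLength]
        congr 1
        apply List.ext_getElem
        · simp [List.length_zipWith, List.length_tail]
        · intro k h1 h2
          have hln : k + 1 < p.length := by
            rw [List.length_zipWith, List.length_tail] at h2; omega
          rw [List.getElem_zipWith, List.getElem_zipWith,
            List.getElem_tail, List.getElem_tail]
          simp only [List.getElem_map, List.getElem_range]
          rw [SeparationQuotient.dist_mk, hdist, sDist, if_pos rfl]
          show |mSig (List.map (⇑e.symm) (p.map ⇑e)) k -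
              mSig (List.map (⇑e.symm) (p.map ⇑e)) (k + 1)| = dist p[k] p[k + 1]
          rw [hqc]
          have hmono := mSig_mono p (Nat.le_succ k)
          rw [abs_sub_comm, abs_of_nonneg (by linarith)]
          rw [mSig_succ m0 p hln,
            List.getD_eq_getElem _ _ (show k < p.length by omega),
            List.getD_eq_getElem _ _ hln]
          ring
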